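/- The map sending a monomial x_{F_1}^{a_1}···x_{F_ℓ}^{a_ℓ} in F̃Y(B_n) to an extended code (α, f) — where if a_1 = 1 then α_i = j−1 for i ∈ F_j\F_{j−1}, α_i = ∞ for i ∉ F_ℓ, and f(j) = a_{j+1}; while if a_1 ≥ 2 then α_i = j for i ∈ F_j\F_{j−1}, α_i = ∞ for i ∉ F_ℓ, f(1) = a_1 − 1, and f(j) = a_j for j ≥ 2 — is a bijection from F̃Y(B_n) to the set of extended codes of length n, under which the degree of the monomial equals ind(α,f) + 1, and which is S_n-equivariant. -/

import Mathlib

open scoped Classical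

/-- The maximum finite value appearing in a sequence over `ℕ ∪ {∞}`
(`∞` contributes `0`). -/
def extMax {n : ℕ} (α : Fin n → ℕ∞) : ℕ := Finset.univ.sup fun i => (α i).toNat

/-- `(α, f)` is an extended code of length `n`: `α` is a sequence over
`ℕ ∪ {∞}`, each `k` with `1 ≤ k ≤ m` (`m` the maximum finite value) occurs at
least twice, and `1 ≤ f k ≤ (occurrences of k) - 1`; `f` vanishes outside
`[m]`.  Positions equal to `∞` are unrestricted. -/
def IsExtCode (n : ℕ) (α : Fin n → ℕ∞) (f : ℕ → ℕ) : Prop :=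
  (∀ k, 1 ≤ k → k ≤ extMax α →
      1 ≤ f k ∧ f k + 1 ≤ (Finset.univ.filter (fun i => α i = (k : ℕ∞))).card) ∧
  (∀ k, k = 0 ∨ extMax α < k → f k = 0)

/-- `ind(α,f) + 1`, where the index of an extended code is the sum of its
marks, and the index of the all-`∞` code is `-1`. -/
noncomputable def extIndP1 {n : ℕ} (α : Fin n → ℕ∞) (f : ℕ → ℕ) : ℕ :=
  if ∀ i, α i = ⊤ then 0 else (∑ k ∈ Finset.Icc 1 (extMax α), f k) + 1

/-- An element `x_{F_1}^{a_1} ⋯ x_{F_ℓ}^{a_ℓ}` of the Feichtner–Yuzvinsky basis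
`F̃Y(B_n)` of the augmented Chow ring of the Boolean matroid: a chain
`∅ ⊊ F_1 ⊊ ⋯ ⊊ F_ℓ ⊆ [n]` with `1 ≤ a_1 ≤ |F_1|` and
`1 ≤ a_i ≤ |F_i| - |F_{i-1}| - 1` for `i ≥ 2` (the empty monomial `1` is the
case `ℓ = 0`). -/
structure FYtMonomial (n : ℕ) where
  len : ℕ
  F : Fin len → Finset (Fin n)
  a : Fin len → ℕ
  chain : ∀ i j : Fin len, i < j → F i ⊂ F j
  a_pos : ∀ i : Fin len, 1 ≤ a i
  a_le_first : ∀ i : Fin len, (i : ℕ) = 0 → a i ≤ (F i).card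
  a_le : ∀ i : Fin len, 0 < (i : ℕ) →
    a i + (F ⟨(i : ℕ) - 1, lt_of_le_of_lt (Nat.sub_le _ _) i.isLt⟩).card + 1 ≤ (F i).card

/-- The degree of an `F̃Y`-basis monomial. -/
def FYtdeg {n : ℕ} (m : FYtMonomial n) : ℕ := ∑ i, m.a i

/-- The map `φ̃ : F̃Y(B_n) → extended codes`.  If `a_1 = 1`: `α_i = j - 1` for
`i ∈ F_j \ F_{j-1}` (this is the number of sets of the chain not containing
`i`), `α_i = ∞` for `i ∉ F_ℓ`, and `f j = a_{j+1}`.  If `a_1 ≥ 2`: `α_i = j`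
for `i ∈ F_j \ F_{j-1}`, `α_i = ∞` for `i ∉ F_ℓ`, `f 1 = a_1 - 1` and
`f j = a_j` for `j ≥ 2`. -/
noncomputable def phiT {n : ℕ} (m : FYtMonomial n) : (Fin n → ℕ∞) × (ℕ → ℕ) :=
  if h0 : 0 < m.len then
    if m.a ⟨0, h0⟩ = 1 then
      (fun i => if ∃ j, i ∈ m.F j then
          (((Finset.univ.filter (fun j => i ∉ m.F j)).card : ℕ) : ℕ∞) else ⊤,
       fun k => if hk : 1 ≤ k ∧ k + 1 ≤ m.len then m.a ⟨k, by omega⟩ else 0)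
    else
      (fun i => if ∃ j, i ∈ m.F j then
          (((Finset.univ.filter (fun j => i ∉ m.F j)).card + 1 : ℕ) : ℕ∞) else ⊤,
       fun k => if k = 1 then m.a ⟨0, h0⟩ - 1
         else if hk : 2 ≤ k ∧ k ≤ m.len then m.a ⟨k - 1, by omega⟩ else 0)
  else (fun _ => ⊤, fun _ => 0)

/-- The action of `σ ∈ S_n` on an `F̃Y`-basis monomial. -/
def permFYt {n : ℕ} (σ : Equiv.Perm (Fin n)) (m : FYtMonomial n) : FYtMonomial n where
  len := m.len
  F := fun j => (m.F j).map σ.toEmbedding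
  a := m.a
  chain := fun i j hij => Finset.map_ssubset_map.mpr (m.chain i j hij)
  a_pos := m.a_pos
  a_le_first := fun i hi => by simpa using m.a_le_first i hi
  a_le := fun i hi => by simpa using m.a_le i hi

/-- The action of `σ ∈ S_n` on extended codes, permuting the positions of `α`. -/
def permExtCode {n : ℕ} (σ : Equiv.Perm (Fin n)) (p : (Fin n → ℕ∞) × (ℕ → ℕ)) :
    (Fin n → ℕ∞) × (ℕ → ℕ) :=
  (fun i => p.1 (σ⁻¹ i), p.2)
-- basic lemmas
section Aux
variable {n : ℕ}

/-- downward-closed subsets of `Fin N` are initial segments -/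
lemma initseg {N : ℕ} (S : Finset (Fin N))
    (hS : ∀ a b : Fin N, a ≤ b → b ∈ S → a ∈ S) (j : Fin N) :
    j ∈ S ↔ (j : ℕ) < S.card := by
  constructor
  · intro hj
    have h1 : Finset.Iic j ⊆ S := fun k hk => hS k j (Finset.mem_Iic.mp hk) hj
    have := Finset.card_le_card h1
    rw [Fin.card_Iic] at this
    omega
  · intro hj
    by_contra hns
    have h1 : S ⊆ Finset.Iio j := by
      intro b hb
      rw [Finset.mem_Iio]
      by_contra hbj
      exact hns (hS j b (le_of_not_gt hbj) hb)
    have := Finset.card_le_card h1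
    rw [Fin.card_Iio] at this
    omega

/-- number of sets of the chain not containing `i` -/
def cnt (m : FYtMonomial n) (i : Fin n) : ℕ :=
  (Finset.univ.filter (fun j => i ∉ m.F j)).card

lemma F_mono (m : FYtMonomial n) {j k : Fin m.len} (h : j ≤ k) : m.F j ⊆ m.F k := by
  rcases eq_or_lt_of_le h with h | h
  · rw [h]
  · exact (m.chain j k h).subset

lemma mem_F_iff (m : FYtMonomial n) (i : Fin n) (j : Fin m.len) :
    i ∈ m.F j ↔ cnt m i ≤ (j : ℕ) := by
  have := initseg (Finset.univ.filter (fun j => i ∉ m.F j))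
    (fun a b hab hb => by
      simp only [Finset.mem_filter, Finset.mem_univ, true_and] at *
      exact fun ha => hb (F_mono m hab ha)) j
  simp only [Finset.mem_filter, Finset.mem_univ, true_and] at this
  unfold cnt
  constructor
  · intro h; by_contra hc; exact (this.mpr (by omega)) h
  · intro h; by_contra hc; have := this.mp hc; omega

lemma cnt_le (m : FYtMonomial n) (i : Fin n) : cnt m i ≤ m.len := by
  have := Finset.card_filter_le Finset.univ (fun j : Fin m.len => i ∉ m.F j)
  simpa [cnt] using this

lemma exists_mem_iff (m : FYtMonomial n) (i : Fin n) :
    (∃ j, i ∈ m.F j) ↔ cnt m i < m.len := by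
  constructor
  · rintro ⟨j, hj⟩
    exact lt_of_le_of_lt ((mem_F_iff m i j).mp hj) j.isLt
  · intro h
    exact ⟨⟨cnt m i, h⟩, (mem_F_iff m i ⟨cnt m i, h⟩).mpr le_rfl⟩

lemma F_card_eq (m : FYtMonomial n) (j : Fin m.len) :
    (m.F j).card = (Finset.univ.filter (fun i => cnt m i ≤ (j : ℕ))).card := by
  congr 1
  ext i
  simp [mem_F_iff m i j]

/-- the level sets of `cnt` -/
lemma level_zero (m : FYtMonomial n) (h0 : 0 < m.len) :
    (Finset.univ.filter (fun i => cnt m i = 0)) = m.F ⟨0, h0⟩ := by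
  ext i
  simp [mem_F_iff m i ⟨0, h0⟩, Nat.le_zero]

lemma level_card (m : FYtMonomial n) (k : ℕ) (hk1 : 0 < k) (hk : k < m.len) :
    (Finset.univ.filter (fun i => cnt m i = k)).card
      = (m.F ⟨k, hk⟩).card - (m.F ⟨k - 1, by omega⟩).card := by
  rw [F_card_eq, F_card_eq]
  simp only [Fin.val_mk]
  have hU : (Finset.univ.filter (fun i : Fin n => cnt m i ≤ k)) =
      (Finset.univ.filter (fun i => cnt m i ≤ k - 1)) ∪
      (Finset.univ.filter (fun i => cnt m i = k)) := by
    ext i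
    simp only [Finset.mem_union, Finset.mem_filter, Finset.mem_univ, true_and]
    omega
  have hD : Disjoint (Finset.univ.filter (fun i : Fin n => cnt m i ≤ k - 1))
      (Finset.univ.filter (fun i => cnt m i = k)) := by
    rw [Finset.disjoint_left]
    intro i hi hi2
    simp only [Finset.mem_filter, Finset.mem_univ, true_and] at hi hi2
    omega
  rw [hU, Finset.card_union_of_disjoint hD]
  omega

end Aux
section Aux2
variable {n : ℕ}

lemma phiT_zero (m : FYtMonomial n) (h0 : ¬ 0 < m.len) :
    phiT m = (fun _ => ⊤, fun _ => 0) := by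
  rw [phiT, dif_neg h0]

lemma phiT_fst_one (m : FYtMonomial n) (h0 : 0 < m.len) (h1 : m.a ⟨0, h0⟩ = 1)
    (i : Fin n) :
    (phiT m).1 i = if cnt m i < m.len then ((cnt m i : ℕ) : ℕ∞) else ⊤ := by
  rw [phiT, dif_pos h0, if_pos h1]
  simp only [exists_mem_iff]
  rfl

lemma phiT_snd_one (m : FYtMonomial n) (h0 : 0 < m.len) (h1 : m.a ⟨0, h0⟩ = 1)
    (k : ℕ) :
    (phiT m).2 k = if hk : 1 ≤ k ∧ k + 1 ≤ m.len then m.a ⟨k, by omega⟩ else 0 := by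
  rw [phiT, dif_pos h0, if_pos h1]

lemma phiT_fst_two (m : FYtMonomial n) (h0 : 0 < m.len) (h1 : ¬ m.a ⟨0, h0⟩ = 1)
    (i : Fin n) :
    (phiT m).1 i = if cnt m i < m.len then ((cnt m i + 1 : ℕ) : ℕ∞) else ⊤ := by
  rw [phiT, dif_pos h0, if_neg h1]
  simp only [exists_mem_iff]
  rfl

lemma phiT_snd_two (m : FYtMonomial n) (h0 : 0 < m.len) (h1 : ¬ m.a ⟨0, h0⟩ = 1)
    (k : ℕ) :
    (phiT m).2 k = if k = 1 then m.a ⟨0, h0⟩ - 1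
      else if hk : 2 ≤ k ∧ k ≤ m.len then m.a ⟨k - 1, by omega⟩ else 0 := by
  rw [phiT, dif_pos h0, if_neg h1]

lemma F0_nonempty (m : FYtMonomial n) (h0 : 0 < m.len) : (m.F ⟨0, h0⟩).Nonempty := by
  rw [← Finset.card_pos]
  have h1 := m.a_pos ⟨0, h0⟩
  have h2 := m.a_le_first ⟨0, h0⟩ rfl
  omega

lemma exists_cnt_max (m : FYtMonomial n) (h0 : 0 < m.len) :
    ∃ i, cnt m i = m.len - 1 := by
  rcases Nat.lt_or_ge 1 m.len with h2 | h2
  · -- m.len ≥ 2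
    have hlt : ¬ (m.F ⟨m.len - 1, by omega⟩ ⊆ m.F ⟨m.len - 1 - 1, by omega⟩) := by
      intro hsub
      have hcard := Finset.card_le_card hsub
      have hle : m.a ⟨m.len - 1, by omega⟩ + (m.F ⟨m.len - 1 - 1, by omega⟩).card + 1
          ≤ (m.F ⟨m.len - 1, by omega⟩).card :=
        m.a_le ⟨m.len - 1, by omega⟩ (by simp only [Fin.val_mk]; omega)
      have hpos := m.a_pos ⟨m.len - 1, by omega⟩
      omega
    obtain ⟨i, hi1, hi2⟩ := Finset.not_subset.mp hlt
    refine ⟨i, ?_⟩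
    have ha := (mem_F_iff m i ⟨m.len - 1, by omega⟩).mp hi1
    have hb : ¬ cnt m i ≤ m.len - 1 - 1 := fun hc =>
      hi2 ((mem_F_iff m i ⟨m.len - 1 - 1, by omega⟩).mpr hc)
    simp only [Fin.val_mk] at ha hb ⊢
    omega
  · -- m.len = 1
    obtain ⟨i, hi⟩ := F0_nonempty m h0
    have := (mem_F_iff m i ⟨0, h0⟩).mp hi
    exact ⟨i, by omega⟩

lemma extMax_one (m : FYtMonomial n) (h0 : 0 < m.len) (h1 : m.a ⟨0, h0⟩ = 1) :
    extMax (phiT m).1 = m.len - 1 := by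
  apply le_antisymm
  · apply Finset.sup_le
    intro i _
    rw [phiT_fst_one m h0 h1]
    split
    · simp only [ENat.toNat_coe]; omega
    · simp
  · obtain ⟨i, hi⟩ := exists_cnt_max m h0
    have hle : ((phiT m).1 i).toNat ≤ extMax (phiT m).1 :=
      Finset.le_sup (f := fun i => ((phiT m).1 i).toNat) (Finset.mem_univ i)
    rw [phiT_fst_one m h0 h1, if_pos (by omega)] at hle
    rw [ENat.toNat_coe] at hle
    omega

lemma extMax_two (m : FYtMonomial n) (h0 : 0 < m.len) (h1 : ¬ m.a ⟨0, h0⟩ = 1) :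
    extMax (phiT m).1 = m.len := by
  apply le_antisymm
  · apply Finset.sup_le
    intro i _
    rw [phiT_fst_two m h0 h1]
    split
    · simp only [ENat.toNat_coe]; omega
    · simp
  · obtain ⟨i, hi⟩ := exists_cnt_max m h0
    have hle : ((phiT m).1 i).toNat ≤ extMax (phiT m).1 :=
      Finset.le_sup (f := fun i => ((phiT m).1 i).toNat) (Finset.mem_univ i)
    rw [phiT_fst_two m h0 h1, if_pos (by omega)] at hle
    rw [ENat.toNat_coe] at hle
    omega

lemma level_one (m : FYtMonomial n) (h0 : 0 < m.len) (h1 : m.a ⟨0, h0⟩ = 1)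
    (k : ℕ) (hk : k < m.len) :
    (Finset.univ.filter (fun i => (phiT m).1 i = (k : ℕ∞)))
      = (Finset.univ.filter (fun i => cnt m i = k)) := by
  ext i
  simp only [Finset.mem_filter, Finset.mem_univ, true_and, phiT_fst_one m h0 h1]
  by_cases h : cnt m i < m.len
  · rw [if_pos h, Nat.cast_inj]
  · rw [if_neg h]
    constructor
    · intro h'; exact absurd h'.symm (by simp)
    · intro h'; omega

lemma level_two (m : FYtMonomial n) (h0 : 0 < m.len) (h1 : ¬ m.a ⟨0, h0⟩ = 1)
    (k : ℕ) (hk1 : 1 ≤ k) (hk : k ≤ m.len) :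
    (Finset.univ.filter (fun i => (phiT m).1 i = (k : ℕ∞)))
      = (Finset.univ.filter (fun i => cnt m i = k - 1)) := by
  ext i
  simp only [Finset.mem_filter, Finset.mem_univ, true_and, phiT_fst_two m h0 h1]
  by_cases h : cnt m i < m.len
  · rw [if_pos h, Nat.cast_inj]
    omega
  · rw [if_neg h]
    constructor
    · intro h'; exact absurd h'.symm (by simp)
    · intro h'; omega

end Aux2
section Aux3
variable {n : ℕ}

lemma a0_ge_two (m : FYtMonomial n) (h0 : 0 < m.len) (h1 : ¬ m.a ⟨0, h0⟩ = 1) :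
    2 ≤ m.a ⟨0, h0⟩ := by
  have := m.a_pos ⟨0, h0⟩
  omega

lemma isExtCode_phiT (m : FYtMonomial n) : IsExtCode n (phiT m).1 (phiT m).2 := by
  by_cases h0 : 0 < m.len
  · by_cases h1 : m.a ⟨0, h0⟩ = 1
    · have hM := extMax_one m h0 h1
      constructor
      · intro k hk1 hk2
        rw [hM] at hk2
        have hk : 1 ≤ k ∧ k + 1 ≤ m.len := ⟨hk1, by omega⟩
        rw [phiT_snd_one m h0 h1, dif_pos hk]
        refine ⟨m.a_pos _, ?_⟩
        rw [level_one m h0 h1 k (by omega), level_card m k (by omega) (by omega)]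
        have hle : m.a ⟨k, by omega⟩ + (m.F ⟨k - 1, by omega⟩).card + 1
            ≤ (m.F ⟨k, by omega⟩).card :=
          m.a_le ⟨k, by omega⟩ (by simp only [Fin.val_mk]; omega)
        omega
      · intro k hk
        rw [phiT_snd_one m h0 h1, dif_neg]
        rw [hM] at hk
        omega
    · have hM := extMax_two m h0 h1
      have h2 := a0_ge_two m h0 h1
      constructor
      · intro k hk1 hk2
        rw [hM] at hk2
        rw [phiT_snd_two m h0 h1]
        rw [level_two m h0 h1 k hk1 hk2]
        by_cases hk : k = 1
        · subst hk
          rw [if_pos rfl]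
          have hfirst := m.a_le_first ⟨0, h0⟩ rfl
          constructor
          · omega
          · have : (Finset.univ.filter (fun i => cnt m i = 1 - 1)) = m.F ⟨0, h0⟩ := by
              simpa using level_zero m h0
            rw [this]
            omega
        · rw [if_neg hk, dif_pos ⟨by omega, hk2⟩]
          rw [level_card m (k - 1) (by omega) (by omega)]
          refine ⟨m.a_pos _, ?_⟩
          have hle : m.a ⟨k - 1, by omega⟩ + (m.F ⟨k - 1 - 1, by omega⟩).card + 1
              ≤ (m.F ⟨k - 1, by omega⟩).card :=
            m.a_le ⟨k - 1, by omega⟩ (by simp only [Fin.val_mk]; omega)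
          omega
      · intro k hk
        rw [hM] at hk
        rw [phiT_snd_two m h0 h1, if_neg (by omega), dif_neg (by omega)]
  · rw [phiT_zero m h0]
    refine ⟨fun k hk1 hk2 => ?_, fun k _ => rfl⟩
    exfalso
    have hz : extMax (fun _ : Fin n => (⊤ : ℕ∞)) = 0 :=
      Nat.le_zero.mp (Finset.sup_le (fun i _ => by simp))
    rw [hz] at hk2
    omega

/-- helper: `a` as a function on `ℕ` -/
def aFn (m : FYtMonomial n) (k : ℕ) : ℕ := if h : k < m.len then m.a ⟨k, h⟩ else 0

lemma deg_eq_sum_range (m : FYtMonomial n) :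
    FYtdeg m = ∑ k ∈ Finset.range m.len, aFn m k := by
  rw [FYtdeg, ← Fin.sum_univ_eq_sum_range]
  exact Finset.sum_congr rfl (fun i _ => by rw [aFn, dif_pos i.isLt])

lemma range_eq_insert (L : ℕ) (hL : 0 < L) :
    Finset.range L = insert 0 (Finset.Icc 1 (L - 1)) := by
  ext k
  simp only [Finset.mem_range, Finset.mem_insert, Finset.mem_Icc]
  omega

lemma deg_phiT (m : FYtMonomial n) : FYtdeg m = extIndP1 (phiT m).1 (phiT m).2 := by
  by_cases h0 : 0 < m.len
  · have hne : ¬ ∀ i, (phiT m).1 i = ⊤ := by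
      obtain ⟨i, hi⟩ := exists_cnt_max m h0
      intro hall
      have := hall i
      by_cases h1 : m.a ⟨0, h0⟩ = 1
      · rw [phiT_fst_one m h0 h1, if_pos (by omega)] at this
        exact (ENat.coe_ne_top _) this
      · rw [phiT_fst_two m h0 h1, if_pos (by omega)] at this
        exact (ENat.coe_ne_top _) this
    rw [extIndP1, if_neg hne, deg_eq_sum_range]
    by_cases h1 : m.a ⟨0, h0⟩ = 1
    · rw [extMax_one m h0 h1]
      have hsum : ∑ k ∈ Finset.Icc 1 (m.len - 1), (phiT m).2 k
          = ∑ k ∈ Finset.Icc 1 (m.len - 1), aFn m k := by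
        refine Finset.sum_congr rfl (fun k hk => ?_)
        rw [Finset.mem_Icc] at hk
        rw [phiT_snd_one m h0 h1, dif_pos ⟨hk.1, by omega⟩, aFn, dif_pos (by omega)]
      rw [hsum, range_eq_insert m.len h0, Finset.sum_insert (by simp)]
      have : aFn m 0 = 1 := by rw [aFn, dif_pos h0]; exact h1
      omega
    · rw [extMax_two m h0 h1]
      have h2 := a0_ge_two m h0 h1
      have ha0 : aFn m 0 = m.a ⟨0, h0⟩ := by rw [aFn, dif_pos h0]
      have hIcc : Finset.Icc 1 m.len = insert 1 (Finset.Icc 2 m.len) := by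
        ext k
        simp only [Finset.mem_Icc, Finset.mem_insert]
        omega
      rw [hIcc, Finset.sum_insert (by simp)]
      have hf1 : (phiT m).2 1 = m.a ⟨0, h0⟩ - 1 := by
        rw [phiT_snd_two m h0 h1, if_pos rfl]
      have hshift : ∑ k ∈ Finset.Icc 2 m.len, (phiT m).2 k
          = ∑ k ∈ Finset.Icc 1 (m.len - 1), aFn m k := by
        have hmap : Finset.Icc 2 m.len
            = Finset.map (addLeftEmbedding 1) (Finset.Icc 1 (m.len - 1)) := by
          rw [Finset.map_add_left_Icc]
          congr 1
          omega
        rw [hmap, Finset.sum_map]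
        refine Finset.sum_congr rfl (fun k hk => ?_)
        rw [Finset.mem_Icc] at hk
        have h3 : (phiT m).2 ((addLeftEmbedding 1) k) = m.a ⟨k, by omega⟩ := by
          have he : (addLeftEmbedding 1) k = 1 + k := rfl
          rw [he, phiT_snd_two m h0 h1, if_neg (by omega),
            dif_pos (⟨by omega, by omega⟩ : 2 ≤ 1 + k ∧ 1 + k ≤ m.len)]
          exact congrArg m.a (Fin.ext (show 1 + k - 1 = k by omega))
        rw [h3]
        unfold aFn
        rw [dif_pos (by omega : k < m.len)]
      rw [hshift, range_eq_insert m.len h0, Finset.sum_insert (by simp), ha0, hf1]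
      omega
  · rw [phiT_zero m h0, extIndP1, if_pos (fun i => rfl), FYtdeg]
    have : m.len = 0 := by omega
    rw [Finset.sum_eq_zero]
    intro i _
    exact absurd i.isLt (by omega)

end Aux3
section Aux4
variable {n : ℕ}

lemma len_zero_iff (m : FYtMonomial n) : m.len = 0 ↔ ∀ i, (phiT m).1 i = ⊤ := by
  constructor
  · intro h i
    rw [phiT_zero m (by omega)]
  · intro hall
    by_contra hlen
    have h0 : 0 < m.len := by omega
    obtain ⟨i, hi⟩ := F0_nonempty m h0
    have hcnt : cnt m i = 0 := by
      have := (mem_F_iff m i ⟨0, h0⟩).mp hi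
      simp only [Fin.val_mk, Nat.le_zero] at this
      exact this
    have := hall i
    by_cases h1 : m.a ⟨0, h0⟩ = 1
    · rw [phiT_fst_one m h0 h1, if_pos (by omega)] at this
      exact ENat.coe_ne_top _ this
    · rw [phiT_fst_two m h0 h1, if_pos (by omega)] at this
      exact ENat.coe_ne_top _ this

lemma a0_one_iff (m : FYtMonomial n) (h0 : 0 < m.len) :
    m.a ⟨0, h0⟩ = 1 ↔ ∃ i, (phiT m).1 i = 0 := by
  constructor
  · intro h1
    obtain ⟨i, hi⟩ := F0_nonempty m h0
    have hcnt : cnt m i = 0 := by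
      have := (mem_F_iff m i ⟨0, h0⟩).mp hi
      simp only [Fin.val_mk, Nat.le_zero] at this
      exact this
    refine ⟨i, ?_⟩
    rw [phiT_fst_one m h0 h1, if_pos (by omega), hcnt]
    rfl
  · rintro ⟨i, hi⟩
    by_contra h1
    rw [phiT_fst_two m h0 h1] at hi
    by_cases h : cnt m i < m.len
    · rw [if_pos h] at hi
      have : cnt m i + 1 = 0 := by exact_mod_cast hi
      omega
    · rw [if_neg h] at hi
      exact (by simp : (⊤ : ℕ∞) ≠ 0) hi

lemma F_rec_one (m : FYtMonomial n) (h0 : 0 < m.len) (h1 : m.a ⟨0, h0⟩ = 1)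
    (j : Fin m.len) :
    m.F j = Finset.univ.filter (fun i => (phiT m).1 i ≤ (((j : ℕ) : ℕ) : ℕ∞)) := by
  ext i
  simp only [Finset.mem_filter, Finset.mem_univ, true_and, mem_F_iff m i j,
    phiT_fst_one m h0 h1]
  by_cases h : cnt m i < m.len
  · rw [if_pos h, Nat.cast_le]
  · rw [if_neg h]
    constructor
    · intro h'; omega
    · intro h'
      exact absurd (top_le_iff.mp h') (by simp)

lemma F_rec_two (m : FYtMonomial n) (h0 : 0 < m.len) (h1 : ¬ m.a ⟨0, h0⟩ = 1)
    (j : Fin m.len) :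
    m.F j = Finset.univ.filter (fun i => (phiT m).1 i ≤ (((j : ℕ) + 1 : ℕ) : ℕ∞)) := by
  ext i
  simp only [Finset.mem_filter, Finset.mem_univ, true_and, mem_F_iff m i j,
    phiT_fst_two m h0 h1]
  by_cases h : cnt m i < m.len
  · rw [if_pos h, Nat.cast_le]
    omega
  · rw [if_neg h]
    constructor
    · intro h'; omega
    · intro h'
      exact absurd (top_le_iff.mp h') (ENat.coe_ne_top _)

lemma FYt_ext (m1 m2 : FYtMonomial n) (hlen : m1.len = m2.len)
    (hF : ∀ k (h : k < m1.len), m1.F ⟨k, h⟩ = m2.F ⟨k, hlen ▸ h⟩)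
    (ha : ∀ k (h : k < m1.len), m1.a ⟨k, h⟩ = m2.a ⟨k, hlen ▸ h⟩) : m1 = m2 := by
  obtain ⟨l1, F1, a1, c1, p1, q1, r1⟩ := m1
  obtain ⟨l2, F2, a2, c2, p2, q2, r2⟩ := m2
  dsimp only at hlen hF ha
  subst hlen
  have hF' : F1 = F2 := funext fun j => by
    have := hF j.1 j.2
    simpa using this
  have ha' : a1 = a2 := funext fun j => by
    have := ha j.1 j.2
    simpa using this
  subst hF'
  subst ha'
  rfl

lemma phiT_injOn (m1 m2 : FYtMonomial n) (hp : phiT m1 = phiT m2) : m1 = m2 := by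
  by_cases h01 : 0 < m1.len
  · have h02 : 0 < m2.len := by
      by_contra h02
      have h2z : m2.len = 0 := by omega
      have := (len_zero_iff m2).mp h2z
      rw [← hp] at this
      have := (len_zero_iff m1).mpr this
      omega
    by_cases h1 : m1.a ⟨0, h01⟩ = 1
    · have h2 : m2.a ⟨0, h02⟩ = 1 := by
        rw [a0_one_iff m2 h02, ← hp, ← a0_one_iff m1 h01]
        exact h1
      have hlen : m1.len = m2.len := by
        have e1 := extMax_one m1 h01 h1
        have e2 := extMax_one m2 h02 h2
        rw [hp] at e1
        omega
      refine FYt_ext m1 m2 hlen (fun k h => ?_) (fun k h => ?_)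
      · rw [F_rec_one m1 h01 h1, F_rec_one m2 h02 h2, hp]
      · rcases Nat.eq_zero_or_pos k with hk | hk
        · subst hk
          rw [h1]
          exact h2.symm
        · have e1 := phiT_snd_one m1 h01 h1 k
          have e2 := phiT_snd_one m2 h02 h2 k
          rw [dif_pos ⟨hk, by omega⟩] at e1
          rw [dif_pos ⟨hk, by omega⟩] at e2
          rw [← e1, ← e2, hp]
    · have h2 : ¬ m2.a ⟨0, h02⟩ = 1 := by
        rw [a0_one_iff m2 h02, ← hp, ← a0_one_iff m1 h01]
        exact h1
      have hlen : m1.len = m2.len := by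
        have e1 := extMax_two m1 h01 h1
        have e2 := extMax_two m2 h02 h2
        rw [hp] at e1
        omega
      refine FYt_ext m1 m2 hlen (fun k h => ?_) (fun k h => ?_)
      · rw [F_rec_two m1 h01 h1, F_rec_two m2 h02 h2, hp]
      · have g1 := a0_ge_two m1 h01 h1
        have g2 := a0_ge_two m2 h02 h2
        rcases Nat.eq_zero_or_pos k with hk | hk
        · subst hk
          have e1 := phiT_snd_two m1 h01 h1 1
          have e2 := phiT_snd_two m2 h02 h2 1
          rw [if_pos rfl] at e1 e2
          have hv : (phiT m1).2 1 = (phiT m2).2 1 := by rw [hp]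
          rw [e1, e2] at hv
          have hg : m2.a ⟨0, hlen ▸ h⟩ = m2.a ⟨0, h02⟩ := rfl
          have hg1 : m1.a ⟨0, h⟩ = m1.a ⟨0, h01⟩ := rfl
          rw [hg, hg1]
          omega
        · have e1 := phiT_snd_two m1 h01 h1 (k + 1)
          have e2 := phiT_snd_two m2 h02 h2 (k + 1)
          rw [if_neg (by omega), dif_pos ⟨by omega, by omega⟩] at e1
          rw [if_neg (by omega), dif_pos ⟨by omega, by omega⟩] at e2
          have hv : (phiT m1).2 (k + 1) = (phiT m2).2 (k + 1) := by rw [hp]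
          rw [e1, e2] at hv
          exact ((congrArg m1.a (Fin.ext (show k = k + 1 - 1 by omega))).trans hv).trans
            (congrArg m2.a (Fin.ext (show k + 1 - 1 = k by omega)))
  · by_cases h02 : 0 < m2.len
    · have h1z : m1.len = 0 := by omega
      have := (len_zero_iff m1).mp h1z
      rw [hp] at this
      have := (len_zero_iff m2).mpr this
      omega
    · exact FYt_ext m1 m2 (by omega) (fun k h => absurd h (by omega))
        (fun k h => absurd h (by omega))

end Aux4
section Aux5
variable {n : ℕ}

lemma le_coe_cases (x : ℕ∞) (k : ℕ) (hk : 1 ≤ k) :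
    x ≤ ((k : ℕ) : ℕ∞) ↔ (x ≤ ((k - 1 : ℕ) : ℕ∞) ∨ x = ((k : ℕ) : ℕ∞)) := by
  cases x using ENat.recTopCoe with
  | top => simp
  | coe v =>
    rw [Nat.cast_le, Nat.cast_le, Nat.cast_inj]
    omega

lemma code_level_split (α : Fin n → ℕ∞) (k : ℕ) (hk : 1 ≤ k) :
    (Finset.univ.filter (fun i => α i ≤ ((k : ℕ) : ℕ∞))).card
      = (Finset.univ.filter (fun i => α i ≤ ((k - 1 : ℕ) : ℕ∞))).card
        + (Finset.univ.filter (fun i => α i = ((k : ℕ) : ℕ∞))).card := by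
  have hU : (Finset.univ.filter (fun i : Fin n => α i ≤ ((k : ℕ) : ℕ∞)))
      = (Finset.univ.filter (fun i => α i ≤ ((k - 1 : ℕ) : ℕ∞)))
        ∪ (Finset.univ.filter (fun i => α i = ((k : ℕ) : ℕ∞))) := by
    ext i
    simp only [Finset.mem_union, Finset.mem_filter, Finset.mem_univ, true_and]
    exact le_coe_cases (α i) k hk
  have hD : Disjoint (Finset.univ.filter (fun i : Fin n => α i ≤ ((k - 1 : ℕ) : ℕ∞)))
      (Finset.univ.filter (fun i => α i = ((k : ℕ) : ℕ∞))) := by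
    rw [Finset.disjoint_left]
    intro i hi hi2
    simp only [Finset.mem_filter, Finset.mem_univ, true_and] at hi hi2
    rw [hi2, Nat.cast_le] at hi
    omega
  rw [hU, Finset.card_union_of_disjoint hD]

lemma card_filter_val_lt {N : ℕ} (v : ℕ) (hv : v < N) :
    (Finset.univ.filter (fun j : Fin N => (j : ℕ) < v)).card = v := by
  have h : (Finset.univ.filter (fun j : Fin N => (j : ℕ) < v)) = Finset.Iio ⟨v, hv⟩ := by
    ext j
    simp [Fin.lt_def]
  rw [h, Fin.card_Iio]

/-- construction for codes containing a `0` -/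
noncomputable def codeMonA (p1 : Fin n → ℕ∞) (p2 : ℕ → ℕ)
    (hp1 : ∀ k, 1 ≤ k → k ≤ extMax p1 →
      1 ≤ p2 k ∧ p2 k + 1 ≤ (Finset.univ.filter (fun i => p1 i = (k : ℕ∞))).card)
    (hz : ∃ i, p1 i = 0) : FYtMonomial n where
  len := extMax p1 + 1
  F := fun j => Finset.univ.filter (fun i => p1 i ≤ (((j : ℕ) : ℕ) : ℕ∞))
  a := fun k => if (k : ℕ) = 0 then 1 else p2 (k : ℕ)
  chain := by
    intro j j' hjj
    rw [Fin.lt_def] at hjj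
    rw [Finset.ssubset_def]
    constructor
    · intro i hi
      simp only [Finset.mem_filter, Finset.mem_univ, true_and] at hi ⊢
      exact le_trans hi (Nat.cast_le.mpr (by omega))
    · intro hsub
      have hocc : 0 < (Finset.univ.filter (fun i => p1 i = ((j' : ℕ) : ℕ∞))).card := by
        have hj' := j'.isLt
        have h2 := (hp1 (j' : ℕ) (by omega) (by omega)).2
        have h3 := (hp1 (j' : ℕ) (by omega) (by omega)).1
        omega
      obtain ⟨i, hi⟩ := Finset.card_pos.mp hocc
      simp only [Finset.mem_filter, Finset.mem_univ, true_and] at hi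
      have hmem : i ∈ Finset.univ.filter (fun i => p1 i ≤ (((j' : ℕ) : ℕ) : ℕ∞)) := by
        simp only [Finset.mem_filter, Finset.mem_univ, true_and]
        exact le_of_eq hi
      have := hsub hmem
      simp only [Finset.mem_filter, Finset.mem_univ, true_and] at this
      rw [hi, Nat.cast_le] at this
      omega
  a_pos := by
    intro i
    split
    · exact le_refl 1
    · rename_i h
      have := i.isLt
      exact (hp1 (i : ℕ) (by omega) (by omega)).1
  a_le_first := by
    intro i hi
    rw [if_pos hi]
    obtain ⟨i0, hi0⟩ := hz
    refine Finset.card_pos.mpr ⟨i0, ?_⟩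
    simp only [Finset.mem_filter, Finset.mem_univ, true_and]
    rw [hi0]
    exact zero_le
  a_le := by
    intro i hi
    dsimp only
    rw [if_neg (by omega)]
    have hilt := i.isLt
    have hsplit := code_level_split p1 (i : ℕ) (by omega)
    have hcard := (hp1 (i : ℕ) (by omega) (by omega)).2
    omega

end Aux5
section Aux6
variable {n : ℕ}

lemma cnt_def (m : FYtMonomial n) (i : Fin n) :
    cnt m i = (Finset.univ.filter (fun j => i ∉ m.F j)).card := rfl

lemma toNat_le_extMax (p1 : Fin n → ℕ∞) (i : Fin n) : (p1 i).toNat ≤ extMax p1 :=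
  Finset.le_sup (f := fun i => (p1 i).toNat) (Finset.mem_univ i)

lemma phiT_codeMonA (p1 : Fin n → ℕ∞) (p2 : ℕ → ℕ)
    (hp1 : ∀ k, 1 ≤ k → k ≤ extMax p1 →
      1 ≤ p2 k ∧ p2 k + 1 ≤ (Finset.univ.filter (fun i => p1 i = (k : ℕ∞))).card)
    (hz : ∃ i, p1 i = 0)
    (hp2 : ∀ k, k = 0 ∨ extMax p1 < k → p2 k = 0) :
    phiT (codeMonA p1 p2 hp1 hz) = (p1, p2) := by
  have hlen : (codeMonA p1 p2 hp1 hz).len = extMax p1 + 1 := rfl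
  have h0 : 0 < (codeMonA p1 p2 hp1 hz).len := by omega
  have ha0 : (codeMonA p1 p2 hp1 hz).a ⟨0, h0⟩ = 1 := by
    unfold codeMonA
    simp
  have hF : ∀ j : Fin (codeMonA p1 p2 hp1 hz).len, (codeMonA p1 p2 hp1 hz).F j
      = Finset.univ.filter (fun i => p1 i ≤ (((j : ℕ) : ℕ) : ℕ∞)) := fun j => rfl
  have hcnt_top : ∀ i, p1 i = ⊤ → cnt (codeMonA p1 p2 hp1 hz) i = extMax p1 + 1 := by
    intro i hi
    rw [cnt_def]
    have he : (Finset.univ.filter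
        (fun j : Fin (codeMonA p1 p2 hp1 hz).len => i ∉ (codeMonA p1 p2 hp1 hz).F j))
        = Finset.univ := by
      apply Finset.filter_true_of_mem
      intro j _
      rw [hF]
      simp [hi]
    rw [he, Finset.card_univ, Fintype.card_fin, hlen]
  have hcnt_coe : ∀ i, p1 i ≠ ⊤ → cnt (codeMonA p1 p2 hp1 hz) i = (p1 i).toNat := by
    intro i hi
    obtain ⟨v, hv⟩ : ∃ v : ℕ, p1 i = (v : ℕ∞) := ⟨(p1 i).toNat, (ENat.coe_toNat hi).symm⟩
    have htn : (p1 i).toNat = v := by rw [hv]; exact ENat.toNat_coe v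
    have hle : v ≤ extMax p1 := htn ▸ toNat_le_extMax p1 i
    rw [cnt_def]
    have he : (Finset.univ.filter
        (fun j : Fin (codeMonA p1 p2 hp1 hz).len => i ∉ (codeMonA p1 p2 hp1 hz).F j))
        = Finset.univ.filter (fun j : Fin (codeMonA p1 p2 hp1 hz).len => (j : ℕ) < v) := by
      apply Finset.filter_congr
      intro j _
      rw [hF]
      simp only [Finset.mem_filter, Finset.mem_univ, true_and]
      rw [hv, Nat.cast_le]
      omega
    rw [he, card_filter_val_lt _ (by rw [hlen]; omega), htn]
  have hfst : (phiT (codeMonA p1 p2 hp1 hz)).1 = p1 := by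
    funext i
    rw [phiT_fst_one _ h0 ha0 i]
    by_cases hi : p1 i = ⊤
    · rw [if_neg (by rw [hcnt_top i hi, hlen]; omega)]
      exact hi.symm
    · have hle := toNat_le_extMax p1 i
      rw [hcnt_coe i hi, if_pos (by rw [hlen]; omega)]
      exact ENat.coe_toNat hi
  have hsnd : (phiT (codeMonA p1 p2 hp1 hz)).2 = p2 := by
    funext k
    rw [phiT_snd_one _ h0 ha0 k]
    by_cases hk : 1 ≤ k ∧ k + 1 ≤ (codeMonA p1 p2 hp1 hz).len
    · rw [dif_pos hk]
      unfold codeMonA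
      dsimp only
      rw [if_neg (by omega)]
    · rw [dif_neg hk]
      rw [hlen] at hk
      exact (hp2 k (by omega)).symm
  exact Prod.ext hfst hsnd

end Aux6
section Aux7
variable {n : ℕ}

/-- construction for codes with no `0` -/
noncomputable def codeMonB (p1 : Fin n → ℕ∞) (p2 : ℕ → ℕ)
    (hp1 : ∀ k, 1 ≤ k → k ≤ extMax p1 →
      1 ≤ p2 k ∧ p2 k + 1 ≤ (Finset.univ.filter (fun i => p1 i = (k : ℕ∞))).card) :
    FYtMonomial n where
  len := extMax p1
  F := fun j => Finset.univ.filter (fun i => p1 i ≤ (((j : ℕ) + 1 : ℕ) : ℕ∞))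
  a := fun k => if (k : ℕ) = 0 then p2 1 + 1 else p2 ((k : ℕ) + 1)
  chain := by
    intro j j' hjj
    rw [Fin.lt_def] at hjj
    rw [Finset.ssubset_def]
    constructor
    · intro i hi
      simp only [Finset.mem_filter, Finset.mem_univ, true_and] at hi ⊢
      exact le_trans hi (Nat.cast_le.mpr (by omega))
    · intro hsub
      have hj' := j'.isLt
      have hocc : 0 < (Finset.univ.filter
          (fun i => p1 i = (((j' : ℕ) + 1 : ℕ) : ℕ∞))).card := by
        have h2 := (hp1 ((j' : ℕ) + 1) (by omega) (by omega)).2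
        have h3 := (hp1 ((j' : ℕ) + 1) (by omega) (by omega)).1
        omega
      obtain ⟨i, hi⟩ := Finset.card_pos.mp hocc
      simp only [Finset.mem_filter, Finset.mem_univ, true_and] at hi
      have hmem : i ∈ Finset.univ.filter
          (fun i => p1 i ≤ (((j' : ℕ) + 1 : ℕ) : ℕ∞)) := by
        simp only [Finset.mem_filter, Finset.mem_univ, true_and]
        exact le_of_eq hi
      have := hsub hmem
      simp only [Finset.mem_filter, Finset.mem_univ, true_and] at this
      rw [hi, Nat.cast_le] at this
      omega
  a_pos := by
    intro i
    split
    · omega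
    · have := i.isLt
      exact (hp1 ((i : ℕ) + 1) (by omega) (by omega)).1
  a_le_first := by
    intro i hi
    rw [if_pos hi, hi]
    have hM1 : 1 ≤ extMax p1 := by
      have := i.isLt
      omega
    have h2 := (hp1 1 le_rfl hM1).2
    have hsub : (Finset.univ.filter (fun i => p1 i = ((1 : ℕ) : ℕ∞)))
        ⊆ (Finset.univ.filter (fun i => p1 i ≤ ((0 + 1 : ℕ) : ℕ∞))) := by
      intro x hx
      simp only [Finset.mem_filter, Finset.mem_univ, true_and] at hx ⊢
      rw [hx]
    have h3 := Finset.card_le_card hsub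
    omega
  a_le := by
    intro i hi
    dsimp only
    rw [if_neg (by omega)]
    have hilt := i.isLt
    have e : (i : ℕ) - 1 + 1 = (i : ℕ) := by omega
    rw [e]
    have hsplit := code_level_split p1 ((i : ℕ) + 1) (by omega)
    have e2 : (i : ℕ) + 1 - 1 = (i : ℕ) := by omega
    rw [e2] at hsplit
    have hcard := (hp1 ((i : ℕ) + 1) (by omega) (by omega)).2
    omega

lemma phiT_codeMonB (p1 : Fin n → ℕ∞) (p2 : ℕ → ℕ)
    (hp1 : ∀ k, 1 ≤ k → k ≤ extMax p1 →
      1 ≤ p2 k ∧ p2 k + 1 ≤ (Finset.univ.filter (fun i => p1 i = (k : ℕ∞))).card)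
    (hz : ∀ i, p1 i ≠ 0)
    (hp2 : ∀ k, k = 0 ∨ extMax p1 < k → p2 k = 0)
    (hM1 : 1 ≤ extMax p1) :
    phiT (codeMonB p1 p2 hp1) = (p1, p2) := by
  have hlen : (codeMonB p1 p2 hp1).len = extMax p1 := rfl
  have h0 : 0 < (codeMonB p1 p2 hp1).len := by omega
  have hf1 := (hp1 1 le_rfl hM1).1
  have ha0 : ¬ (codeMonB p1 p2 hp1).a ⟨0, h0⟩ = 1 := by
    have he : (codeMonB p1 p2 hp1).a ⟨0, h0⟩ = p2 1 + 1 := by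
      unfold codeMonB
      simp
    rw [he]
    omega
  have hF : ∀ j : Fin (codeMonB p1 p2 hp1).len, (codeMonB p1 p2 hp1).F j
      = Finset.univ.filter (fun i => p1 i ≤ (((j : ℕ) + 1 : ℕ) : ℕ∞)) := fun j => rfl
  have hvpos : ∀ i (v : ℕ), p1 i = (v : ℕ∞) → 1 ≤ v := by
    intro i v hv
    rcases Nat.eq_zero_or_pos v with h | h
    · subst h
      exact absurd (by exact_mod_cast hv) (hz i)
    · exact h
  have hcnt_top : ∀ i, p1 i = ⊤ → cnt (codeMonB p1 p2 hp1) i = extMax p1 := by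
    intro i hi
    rw [cnt_def]
    have he : (Finset.univ.filter
        (fun j : Fin (codeMonB p1 p2 hp1).len => i ∉ (codeMonB p1 p2 hp1).F j))
        = Finset.univ := by
      apply Finset.filter_true_of_mem
      intro j _
      rw [hF]
      simp only [Finset.mem_filter, Finset.mem_univ, true_and, hi, top_le_iff]
      exact ENat.coe_ne_top _
    rw [he, Finset.card_univ, Fintype.card_fin, hlen]
  have hcnt_coe : ∀ i (v : ℕ), p1 i = (v : ℕ∞) → cnt (codeMonB p1 p2 hp1) i = v - 1 := by
    intro i v hv
    have hv1 := hvpos i v hv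
    have hle : v ≤ extMax p1 := by
      have := toNat_le_extMax p1 i
      rw [hv, ENat.toNat_coe] at this
      exact this
    rw [cnt_def]
    have he : (Finset.univ.filter
        (fun j : Fin (codeMonB p1 p2 hp1).len => i ∉ (codeMonB p1 p2 hp1).F j))
        = Finset.univ.filter (fun j : Fin (codeMonB p1 p2 hp1).len => (j : ℕ) < v - 1) := by
      apply Finset.filter_congr
      intro j _
      rw [hF]
      simp only [Finset.mem_filter, Finset.mem_univ, true_and]
      rw [hv, Nat.cast_le]
      omega
    rw [he, card_filter_val_lt _ (by rw [hlen]; omega)]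
  have hfst : (phiT (codeMonB p1 p2 hp1)).1 = p1 := by
    funext i
    rw [phiT_fst_two _ h0 ha0 i]
    by_cases hi : p1 i = ⊤
    · rw [if_neg (by rw [hcnt_top i hi, hlen]; omega)]
      exact hi.symm
    · obtain ⟨v, hv⟩ : ∃ v : ℕ, p1 i = (v : ℕ∞) := ⟨(p1 i).toNat, (ENat.coe_toNat hi).symm⟩
      have hv1 := hvpos i v hv
      have hle : v ≤ extMax p1 := by
        have := toNat_le_extMax p1 i
        rw [hv, ENat.toNat_coe] at this
        exact this
      rw [hcnt_coe i v hv, if_pos (by rw [hlen]; omega)]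
      rw [hv]
      exact congrArg _ (by omega)
  have hsnd : (phiT (codeMonB p1 p2 hp1)).2 = p2 := by
    funext k
    rw [phiT_snd_two _ h0 ha0 k]
    by_cases hk1 : k = 1
    · subst hk1
      rw [if_pos rfl]
      unfold codeMonB
      dsimp only
      rw [if_pos rfl]
      omega
    · rw [if_neg hk1]
      by_cases hk : 2 ≤ k ∧ k ≤ (codeMonB p1 p2 hp1).len
      · rw [dif_pos hk]
        unfold codeMonB
        dsimp only
        rw [if_neg (by omega)]
        exact congrArg p2 (by omega)
      · rw [dif_neg hk]
        rw [hlen] at hk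
        exact (hp2 k (by omega)).symm
  exact Prod.ext hfst hsnd

end Aux7
section Aux8
variable {n : ℕ}

lemma phiT_equivariant (σ : Equiv.Perm (Fin n)) (m : FYtMonomial n) :
    phiT (permFYt σ m) = permExtCode σ (phiT m) := by
  by_cases h0 : 0 < m.len
  · have h0' : 0 < (permFYt σ m).len := h0
    have hcnt : ∀ i, cnt (permFYt σ m) i = cnt m (σ⁻¹ i) := by
      intro i
      rw [cnt_def, cnt_def]
      congr 1
      suffices h : ∀ j ∈ (Finset.univ : Finset (Fin m.len)),
          (i ∉ (permFYt σ m).F j ↔ σ⁻¹ i ∉ m.F j) by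
        ext j
        exact (Finset.mem_filter.trans (and_iff_right (Finset.mem_univ j))).trans
          ((h j (Finset.mem_univ j)).trans
            ((Finset.mem_filter (s := Finset.univ) (p := fun j : Fin m.len => σ⁻¹ i ∉ m.F j)).trans
              (and_iff_right (Finset.mem_univ _))).symm)
      intro j _
      have hFe : (permFYt σ m).F j = (m.F j).map σ.toEmbedding := rfl
      rw [hFe]
      rw [not_iff_not]
      exact Finset.mem_map_equiv
    by_cases h1 : m.a ⟨0, h0⟩ = 1
    · have h1' : (permFYt σ m).a ⟨0, h0'⟩ = 1 := h1
      refine Prod.ext ?_ ?_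
      · funext i
        have hR : (permExtCode σ (phiT m)).1 i = (phiT m).1 (σ⁻¹ i) := rfl
        rw [hR, phiT_fst_one _ h0' h1' i, phiT_fst_one m h0 h1 (σ⁻¹ i), hcnt i]
        rfl
      · funext k
        have hR : (permExtCode σ (phiT m)).2 k = (phiT m).2 k := rfl
        rw [hR, phiT_snd_one _ h0' h1' k, phiT_snd_one m h0 h1 k]
        rfl
    · have h1' : ¬ (permFYt σ m).a ⟨0, h0'⟩ = 1 := h1
      refine Prod.ext ?_ ?_
      · funext i
        have hR : (permExtCode σ (phiT m)).1 i = (phiT m).1 (σ⁻¹ i) := rfl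
        rw [hR, phiT_fst_two _ h0' h1' i, phiT_fst_two m h0 h1 (σ⁻¹ i), hcnt i]
        rfl
      · funext k
        have hR : (permExtCode σ (phiT m)).2 k = (phiT m).2 k := rfl
        rw [hR, phiT_snd_two _ h0' h1' k, phiT_snd_two m h0 h1 k]
        rfl
  · rw [phiT_zero m h0, phiT_zero _ (by exact h0 : ¬ 0 < (permFYt σ m).len)]
    rfl

/-- the empty monomial -/
def emptyMon (n : ℕ) : FYtMonomial n :=
  ⟨0, Fin.elim0, Fin.elim0, fun i => i.elim0, fun i => i.elim0,
    fun i => i.elim0, fun i => i.elim0⟩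

lemma phiT_surj (p : (Fin n → ℕ∞) × (ℕ → ℕ)) (hp : IsExtCode n p.1 p.2) :
    ∃ m : FYtMonomial n, phiT m = p := by
  obtain ⟨p1, p2⟩ := p
  obtain ⟨hp1, hp2⟩ := hp
  replace hp1 : ∀ k, 1 ≤ k → k ≤ extMax p1 →
      1 ≤ p2 k ∧ p2 k + 1 ≤ (Finset.univ.filter (fun i => p1 i = (k : ℕ∞))).card := hp1
  replace hp2 : ∀ k, k = 0 ∨ extMax p1 < k → p2 k = 0 := hp2
  by_cases hall : ∀ i, p1 i = ⊤
  · refine ⟨emptyMon n, ?_⟩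
    rw [phiT_zero _ (lt_irrefl 0 : ¬ 0 < (emptyMon n).len)]
    have hM0 : extMax p1 = 0 := by
      apply Nat.le_zero.mp
      apply Finset.sup_le
      intro i _
      rw [hall i]
      simp
    refine Prod.ext (funext fun i => (hall i).symm) (funext fun k => ?_)
    rcases Nat.eq_zero_or_pos k with hk | hk
    · exact (hp2 k (Or.inl hk)).symm
    · exact (hp2 k (Or.inr (by omega))).symm
  · by_cases hz : ∃ i, p1 i = 0
    · exact ⟨codeMonA p1 p2 hp1 hz, phiT_codeMonA p1 p2 hp1 hz hp2⟩
    · push_neg at hz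
      have hM1 : 1 ≤ extMax p1 := by
        push_neg at hall
        obtain ⟨i, hi⟩ := hall
        obtain ⟨v, hv⟩ : ∃ v : ℕ, p1 i = (v : ℕ∞) := ⟨(p1 i).toNat, (ENat.coe_toNat hi).symm⟩
        have hv1 : 1 ≤ v := by
          rcases Nat.eq_zero_or_pos v with h | h
          · exact absurd (by rw [hv, h]; rfl : p1 i = 0) (hz i)
          · exact h
        have := toNat_le_extMax p1 i
        rw [hv, ENat.toNat_coe] at this
        omega
      exact ⟨codeMonB p1 p2 hp1, phiT_codeMonB p1 p2 hp1 hz hp2 hM1⟩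

end Aux8

/-- `φ̃` is a bijection from `F̃Y(B_n)` onto the set of extended codes of
length `n`, the degree of a monomial equals `ind(α,f) + 1`, and `φ̃` is
`S_n`-equivariant. -/
theorem phiT_bijection (n : ℕ) :
    Set.BijOn (phiT (n := n)) Set.univ
      {p : (Fin n → ℕ∞) × (ℕ → ℕ) | IsExtCode n p.1 p.2} ∧
    (∀ m : FYtMonomial n, FYtdeg m = extIndP1 (phiT m).1 (phiT m).2) ∧
    (∀ (σ : Equiv.Perm (Fin n)) (m : FYtMonomial n),
      phiT (permFYt σ m) = permExtCode σ (phiT m)) := by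
  refine ⟨⟨fun m _ => isExtCode_phiT m, fun m1 _ m2 _ h => phiT_injOn m1 m2 h, ?_⟩,
    fun m => deg_phiT m, fun σ m => phiT_equivariant σ m⟩
  intro p hp
  obtain ⟨m, hm⟩ := phiT_surj p hp
  exact ⟨m, Set.mem_univ m, hm⟩
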